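/- arXiv:1711.00963 — 4 statements merged into one kernel-verified Lean document; each statement's English description precedes it below -/
import Mathlib

section
/- Let G be a temporal graph and suppose that every layer G_t with t in the interval [t_1, t_2] is edgeless (contains no time-edge). Let G' be obtained from G by replacing every time-edge (e, t') with t' > t_2 by (e, t' − t_2 + t_1 − 1). Then G has a non-strict temporal (s,z)-path if and only if G' has a non-strict temporal (s,z)-path. -/
namespace TempSep

variable {V : Type*}

/-- A list of directed time-edges forms a temporal `(s,z)`-path; consecutive
time labels are related by `R` (`≤` for non-strict, `<` for strict paths). -/
def IsPathWith (R : ℕ → ℕ → Prop) (E : Set (V × V × ℕ)) (s z : V)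
    (p : List (V × V × ℕ)) : Prop :=
  p ≠ [] ∧
  p.head?.map Prod.fst = some s ∧
  p.getLast?.map (fun e => e.2.1) = some z ∧
  (∀ e ∈ p, e ∈ E) ∧
  p.Chain' (fun a b => a.2.1 = b.1) ∧
  (s :: p.map (fun e => e.2.1)).Nodup ∧
  p.Chain' (fun a b => R a.2.2 b.2.2)

/-- A non-strict temporal `(s,z)`-path. -/
abbrev IsPath (E : Set (V × V × ℕ)) (s z : V) (p : List (V × V × ℕ)) : Prop :=
  IsPathWith (· ≤ ·) E s z p

/-- A strict temporal `(s,z)`-path. -/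
abbrev IsStrictPath (E : Set (V × V × ℕ)) (s z : V) (p : List (V × V × ℕ)) : Prop :=
  IsPathWith (· < ·) E s z p

/-- The path `p` avoids the vertex set `S`. -/
def Avoids (S : Set V) (p : List (V × V × ℕ)) : Prop :=
  ∀ e ∈ p, e.1 ∉ S ∧ e.2.1 ∉ S

/-- `S` is a (non-strict) temporal `(s,z)`-separator. -/
def IsSep (E : Set (V × V × ℕ)) (s z : V) (S : Set V) : Prop :=
  s ∉ S ∧ z ∉ S ∧ ∀ p, IsPath E s z p → ¬ Avoids S p

/-- `S` is a strict temporal `(s,z)`-separator. -/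
def IsStrictSep (E : Set (V × V × ℕ)) (s z : V) (S : Set V) : Prop :=
  s ∉ S ∧ z ∉ S ∧ ∀ p, IsStrictPath E s z p → ¬ Avoids S p


lemma chain'_imp_mem {α : Type*} {R S : α → α → Prop} :
    ∀ {l : List α}, (∀ a ∈ l, ∀ b ∈ l, R a b → S a b) → l.Chain' R → l.Chain' S
  | [], _, _ => List.isChain_nil
  | [_], _, _ => List.isChain_singleton _
  | a :: b :: l, h, hc => by
      unfold List.Chain' at hc ⊢; rw [List.isChain_cons_cons] at hc ⊢
      exact ⟨h a (by simp) b (by simp) hc.1,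
        chain'_imp_mem (fun x hx y hy => h x (by simp [hx]) y (by simp [hy])) hc.2⟩

lemma map_path (E E' : Set (V × V × ℕ)) (φ : ℕ → ℕ)
    (hE : ∀ e ∈ E, (e.1, e.2.1, φ e.2.2) ∈ E')
    (hmono : ∀ e ∈ E, ∀ e' ∈ E, e.2.2 ≤ e'.2.2 → φ e.2.2 ≤ φ e'.2.2)
    (s z : V) (p : List (V × V × ℕ)) (hp : IsPath E s z p) :
    IsPath E' s z (p.map (fun e => (e.1, e.2.1, φ e.2.2))) := by
  obtain ⟨h0, hh, hl, hmem, hch, hnd, hR⟩ := hp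
  refine ⟨by simpa using h0, ?_, ?_, ?_, ?_, ?_, ?_⟩
  · simpa [List.head?_map, Option.map_map, Function.comp] using hh
  · simpa [List.getLast?_map, Option.map_map, Function.comp] using hl
  · intro e he
    simp only [List.mem_map] at he
    obtain ⟨a, ha, rfl⟩ := he
    exact hE a (hmem a ha)
  · unfold List.Chain'; rw [List.isChain_map]; exact hch
  · simpa [List.map_map, Function.comp_def] using hnd
  · unfold List.Chain'; rw [List.isChain_map]
    exact chain'_imp_mem (fun a ha b hb h => hmono a (hmem a ha) b (hmem b hb) h) hR

/-- If every layer in the interval `[t₁, t₂]` is edgeless, then shifting every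
label `t' > t₂` to `t' - t₂ + t₁ - 1` preserves the existence of a non-strict
temporal `(s,z)`-path. -/
theorem shift_idle_layers (E : Set (V × V × ℕ)) (s z : V) (t₁ t₂ : ℕ)
    (h1 : 1 ≤ t₁) (h12 : t₁ ≤ t₂)
    (hidle : ∀ e ∈ E, e.2.2 < t₁ ∨ t₂ < e.2.2) :
    (∃ p, IsPath E s z p) ↔
      (∃ p, IsPath
        ((fun e : V × V × ℕ =>
          (e.1, e.2.1, if t₂ < e.2.2 then e.2.2 - t₂ + t₁ - 1 else e.2.2)) '' E)
        s z p) := by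
  set f : ℕ → ℕ := fun t => if t₂ < t then t - t₂ + t₁ - 1 else t with hf
  set g : ℕ → ℕ := fun t => if t₁ ≤ t then t + t₂ - t₁ + 1 else t with hg
  constructor
  · rintro ⟨p, hp⟩
    refine ⟨p.map (fun e => (e.1, e.2.1, f e.2.2)), map_path E _ f ?_ ?_ s z p hp⟩
    · intro e he; exact ⟨e, he, rfl⟩
    · intro e he e' he' hle
      have := hidle e he; have := hidle e' he'
      simp only [hf]; split_ifs <;> omega
  · rintro ⟨p, hp⟩
    refine ⟨p.map (fun e => (e.1, e.2.1, g e.2.2)), map_path _ E g ?_ ?_ s z p hp⟩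
    · rintro e ⟨a, ha, rfl⟩
      have := hidle a ha
      have h2 : g (f a.2.2) = a.2.2 := by simp only [hf, hg]; split_ifs <;> omega
      rw [show g (if t₂ < a.2.2 then a.2.2 - t₂ + t₁ - 1 else a.2.2) = a.2.2 from h2]; simpa using ha
    · intro e _ e' _ hle
      simp only [hg]; split_ifs <;> omega

end TempSep
end

section
/- Let G be a temporal graph, s,z distinct vertices, and H the strict static expansion of (G,s,z). Then there is a strict temporal (s,z)-path in G if and only if there is a directed (s,z)-path in H. -/
namespace TempSep

variable {V : Type*}

/-- The vertices of the strict static expansion: source, sink, and time copies. -/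
inductive ExpV (V : Type*) where
  | src : ExpV V
  | snk : ExpV V
  | node : V → ℕ → ExpV V

/-- `phi E v` is the set `{t, t+1 : ∃ w, ({v,w},t) ∈ E}`. -/
def phi (E : Set (V × V × ℕ)) (v : V) : Set ℕ :=
  {x | ∃ w t, (v, w, t) ∈ E ∧ (x = t ∨ x = t + 1)}

/-- The arcs of the strict static expansion of `(G,s,z)`. -/
inductive Arc (E : Set (V × V × ℕ)) (s z : V) : ExpV V → ExpV V → Prop where
  | step {v w : V} {t : ℕ} : (v, w, t) ∈ E → v ≠ s → v ≠ z → w ≠ s → w ≠ z →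
      Arc E s z (.node v t) (.node w (t + 1))
  | fromSrc {w : V} {t : ℕ} : (s, w, t) ∈ E → w ≠ s → w ≠ z →
      Arc E s z .src (.node w (t + 1))
  | toSnk {v : V} {t : ℕ} : (v, z, t) ∈ E → v ≠ s → v ≠ z →
      Arc E s z (.node v t) .snk
  | col {v : V} {t t' : ℕ} : t ∈ phi E v → t' ∈ phi E v → t < t' →
      (∀ t'' ∈ phi E v, ¬ (t < t'' ∧ t'' < t')) → v ≠ s → v ≠ z →
      Arc E s z (.node v t) (.node v t')

section Aux

/-- A temporal walk: like a strict path but without the `Nodup` condition. -/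
def IsWalkAux (E : Set (V × V × ℕ)) (s z : V) (p : List (V × V × ℕ)) : Prop :=
  p ≠ [] ∧
  p.head?.map Prod.fst = some s ∧
  p.getLast?.map (fun e => e.2.1) = some z ∧
  (∀ e ∈ p, e ∈ E) ∧
  p.Chain' (fun a b => a.2.1 = b.1) ∧
  p.Chain' (fun a b => a.2.2 < b.2.2)

private lemma timeTrans : IsTrans (V × V × ℕ) (fun a b => a.2.2 < b.2.2) :=
  ⟨fun _ _ _ h1 h2 => lt_trans h1 h2⟩

/-- From any strict temporal walk one can obtain a strict temporal path. -/
lemma walk_to_path (E : Set (V × V × ℕ)) (s z : V) (hsz : s ≠ z) :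
    ∀ n p, p.length ≤ n → IsWalkAux E s z p → ∃ q, IsStrictPath E s z q := by
  haveI := timeTrans (V := V)
  intro n
  induction n with
  | zero =>
    intro p hlen hw
    exact absurd (List.length_eq_zero_iff.mp (Nat.le_zero.mp hlen)) hw.1
  | succ n ih =>
    intro p hlen ⟨hne, hhead, hlast, hmem, hchv, hcht⟩
    by_cases hnd : (s :: p.map (fun e => e.2.1)).Nodup
    · exact ⟨p, hne, hhead, hlast, hmem, hchv, hnd, hcht⟩
    · -- find a repeated vertex and shortcut
      have hlen0 : 0 < p.length := List.length_pos_iff.mpr hne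
      have hlast' : (p[p.length - 1]'(by omega)).2.1 = z := by
        rw [List.getLast?_eq_getElem?] at hlast
        rw [List.getElem?_eq_getElem (by omega)] at hlast
        simpa using hlast
      have hpw : List.Pairwise (fun a b => a.2.2 < b.2.2) p :=
        by haveI : Trans (fun a b : V × V × ℕ => a.2.2 < b.2.2) (fun a b : V × V × ℕ => a.2.2 < b.2.2) (fun a b : V × V × ℕ => a.2.2 < b.2.2) := ⟨fun h1 h2 => lt_trans h1 h2⟩; exact List.isChain_iff_pairwise.mp hcht
      rw [List.Nodup, List.pairwise_iff_get] at hnd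
      push_neg at hnd
      obtain ⟨⟨i, hi⟩, ⟨j, hj⟩, hij, heq⟩ := hnd
      simp only [List.length_cons, List.length_map] at hi hj
      replace hij : i < j := hij
      have hchv' := List.isChain_iff_getElem.mp hchv
      -- q0.get at successor indices
      match j, hj with
      | j + 1, hj =>
      have hjp : j < p.length := by simpa using hj
      have hgj : (s :: p.map (fun e => e.2.1)).get ⟨j + 1, by simpa using hj⟩
          = (p[j]'hjp).2.1 := by
        simp [List.get_cons_succ]
      match i, hi with
      | 0, _ =>
        -- s repeats: drop the prefix
        have hsj : (p[j]'hjp).2.1 = s := by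
          rw [← hgj]; exact heq.symm ▸ rfl
        have hjn : j + 1 < p.length := by
          rcases Nat.lt_or_ge (j+1) p.length with h | h
          · exact h
          · exfalso
            have : j = p.length - 1 := by omega
            subst this
            exact hsz (hsj.symm.trans hlast')
        refine ih (p.drop (j+1)) (by simp; omega) ⟨?_, ?_, ?_, ?_, ?_, ?_⟩
        · simpa [List.drop_eq_nil_iff] using hjn
        · rw [List.head?_drop, List.getElem?_eq_getElem hjn]
          have h2 := hchv' j (by omega)
          simp only [Option.map_some]
          rw [← h2, hsj]
        · rw [List.getLast?_drop, if_neg (by omega)]; exact hlast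
        · exact fun e he => hmem e ((List.drop_sublist _ _).mem he)
        · exact List.IsChain.drop hchv _
        · exact List.IsChain.drop hcht _
      | i + 1, hi =>
        have hip : i < p.length := by simpa using hi
        have hgi : (s :: p.map (fun e => e.2.1)).get ⟨i + 1, by simpa using hi⟩
            = (p[i]'hip).2.1 := by
          simp [List.get_cons_succ]
        have hvv : (p[i]'hip).2.1 = (p[j]'hjp).2.1 := by
          rw [← hgi, ← hgj]; exact heq
        have hijlt : i < j := by omega
        set p' := p.take (i+1) ++ p.drop (j+1) with hp'
        have hlen' : p'.length = (i+1) + (p.length - (j+1)) := by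
          simp [hp']; omega
        have htake_last : (p.take (i+1)).getLast? = some (p[i]'hip) := by
          rw [List.getLast?_eq_getElem?]
          have h1 : (p.take (i+1)).length = i + 1 := by simp; omega
          rw [h1]
          simp only [Nat.add_sub_cancel]
          rw [List.getElem?_take, if_pos (by omega), List.getElem?_eq_getElem hip]
        refine ih p' (by rw [hlen']; omega) ⟨?_, ?_, ?_, ?_, ?_, ?_⟩
        · intro h
          have := congrArg List.length h
          rw [hlen'] at this
          simp at this
        · rw [List.head?_eq_getElem?, hp', List.getElem?_append,
            if_pos (by simp; omega), List.getElem?_take, if_pos (by omega),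
            ← List.head?_eq_getElem?]
          exact hhead
        · rcases Nat.lt_or_ge (j+1) p.length with h | h
          · have hdne : p.drop (j+1) ≠ [] := by simpa [List.drop_eq_nil_iff] using h
            rw [hp', List.getLast?_append_of_ne_nil _ hdne,
              List.getLast?_drop, if_neg (by omega)]
            exact hlast
          · have hdnil : p.drop (j+1) = [] := by simp; omega
            rw [hp', hdnil, List.append_nil, htake_last]
            simp only [Option.map_some]
            rw [hvv]
            have hj' : j = p.length - 1 := by omega
            subst hj'
            rw [hlast']
        · intro e he
          rcases List.mem_append.mp he with h | h
          · exact hmem e ((List.take_sublist _ _).mem h)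
          · exact hmem e ((List.drop_sublist _ _).mem h)
        · unfold List.Chain'; rw [List.isChain_append]
          refine ⟨List.IsChain.take hchv _, List.IsChain.drop hchv _, ?_⟩
          intro x hx y hy
          rw [htake_last, Option.mem_some_iff] at hx
          rw [List.head?_drop] at hy
          obtain ⟨hjn, hyy⟩ := List.getElem?_eq_some_iff.mp hy
          subst hx
          have := hchv' j (by omega)
          rw [← hyy]
          have hy' : p.get ⟨j+1, hjn⟩ = p[j+1]'hjn := rfl
          rw [hvv]
          simpa using this
        · unfold List.Chain'; rw [List.isChain_append]
          refine ⟨List.IsChain.take hcht _, List.IsChain.drop hcht _, ?_⟩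
          intro x hx y hy
          rw [htake_last, Option.mem_some_iff] at hx
          rw [List.head?_drop] at hy
          obtain ⟨hjn, hyy⟩ := List.getElem?_eq_some_iff.mp hy
          subst hx
          rw [← hyy]
          have := List.pairwise_iff_get.mp hpw ⟨i, hip⟩ ⟨j+1, hjn⟩ (by exact (by omega : i < j+1))
          simpa using this

/-- Climbing a column of the static expansion. -/
lemma climb (E : Set (V × V × ℕ)) (s z : V) {v : V} (hvs : v ≠ s) (hvz : v ≠ z) :
    ∀ d a b, a ∈ phi E v → b ∈ phi E v → a ≤ b → b - a ≤ d →
      Relation.ReflTransGen (Arc E s z) (.node v a) (.node v b) := by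
  intro d
  induction d with
  | zero =>
    intro a b ha hb hab h
    have : a = b := by omega
    subst this; exact .refl
  | succ d ih =>
    intro a b ha hb hab h
    rcases eq_or_lt_of_le hab with rfl | hlt
    · exact .refl
    · classical
      have hex : ∃ m, m ∈ phi E v ∧ a < m := ⟨b, hb, hlt⟩
      have hc := Nat.find_spec hex
      have hcb : Nat.find hex ≤ b := Nat.find_min' hex ⟨hb, hlt⟩
      have harc : Arc E s z (.node v a) (.node v (Nat.find hex)) :=
        Arc.col ha hc.1 hc.2
          (fun t'' ht'' h2 => Nat.find_min hex h2.2 ⟨ht'', h2.1⟩) hvs hvz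
      exact Relation.ReflTransGen.head harc
        (ih (Nat.find hex) b hc.1 hb hcb (by omega))

/-- From a strict temporal walk starting at `v` one can reach the sink. -/
lemma reach_snk (E : Set (V × V × ℕ)) (s z : V)
    (hsym : ∀ u v t, (u, v, t) ∈ E → (v, u, t) ∈ E) :
    ∀ p : List (V × V × ℕ), ∀ v t, v ≠ s → v ≠ z → t ∈ phi E v →
      p ≠ [] → p.head?.map Prod.fst = some v →
      p.getLast?.map (fun e => e.2.1) = some z →
      (∀ e ∈ p, e ∈ E) → p.Chain' (fun a b => a.2.1 = b.1) →
      p.Chain' (fun a b => a.2.2 < b.2.2) →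
      (∀ e ∈ p.head?, t ≤ e.2.2) →
      (∀ e ∈ p, e.2.1 ≠ s) → (p.map (fun e => e.2.1)).Nodup →
      Relation.ReflTransGen (Arc E s z) (.node v t) .snk := by
  intro p
  induction p with
  | nil => simp
  | cons e rest ih =>
    intro v t hvs hvz htphi _ hhead hlast hmem hchv hcht hts hns hnd
    obtain ⟨a, w, te⟩ := e
    have ha : v = a := by simpa [eq_comm] using hhead
    subst ha
    have heE : (v, w, te) ∈ E := hmem _ (List.mem_cons_self)
    have htephi : te ∈ phi E v := ⟨w, te, heE, Or.inl rfl⟩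
    have hle : t ≤ te := by simpa using hts
    have hclimb : Relation.ReflTransGen (Arc E s z) (.node v t) (.node v te) :=
      climb E s z hvs hvz (te - t) t te htphi htephi hle le_rfl
    cases rest with
    | nil =>
      have hwz : w = z := by simpa using hlast
      subst hwz
      exact hclimb.trans (Relation.ReflTransGen.single (Arc.toSnk heE hvs hvz))
    | cons f rest' =>
      have hwf : w = f.1 := (List.isChain_cons_cons.mp hchv).1
      have hws : w ≠ s := hns _ (List.mem_cons_self)
      have hzlast : ((f :: rest').getLast?.map (fun e => e.2.1)) = some z := by
        rw [← List.getLast?_cons_cons]; exact hlast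
      obtain ⟨g, hg1, hg2⟩ : ∃ g, (f :: rest').getLast? = some g ∧ g.2.1 = z := by
        cases hh : (f :: rest').getLast? with
        | none => rw [hh] at hzlast; simp at hzlast
        | some g => rw [hh] at hzlast; exact ⟨g, rfl, by simpa using hzlast⟩
      have hzmem : z ∈ (f :: rest').map (fun e => e.2.1) :=
        hg2 ▸ List.mem_map_of_mem (List.mem_of_getLast? hg1)
      have hwz : w ≠ z := by
        intro h
        rw [List.map_cons, List.nodup_cons] at hnd
        exact hnd.1 (by rw [h]; exact hzmem)
      have harc : Arc E s z (.node v te) (.node w (te + 1)) :=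
        Arc.step heE hvs hvz hws hwz
      have hrest : Relation.ReflTransGen (Arc E s z) (.node w (te + 1)) .snk := by
        refine ih w (te + 1) hws hwz ⟨v, te, hsym _ _ _ heE, Or.inr rfl⟩
          (List.cons_ne_nil _ _) ?_ ?_
          (fun e he => hmem e (List.mem_cons_of_mem _ he))
          (List.IsChain.tail hchv) (List.IsChain.tail hcht) ?_
          (fun e he => hns e (List.mem_cons_of_mem _ he))
          (by rw [List.map_cons, List.nodup_cons] at hnd; exact hnd.2)
        · simp [← hwf]
        · rw [← List.getLast?_cons_cons]; exact hlast
        · intro e he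
          simp only [List.head?_cons, Option.mem_some_iff] at he
          subst he
          have := (List.isChain_cons_cons.mp hcht).1
          simp only at this
          omega
      exact hclimb.trans (Relation.ReflTransGen.head harc hrest)

/-- Extract a temporal walk from a path in the expansion starting at a node. -/
lemma extract_walk (E : Set (V × V × ℕ)) (s z : V) :
    ∀ a : ExpV V, Relation.ReflTransGen (Arc E s z) a .snk →
      ∀ v t, a = .node v t →
        ∃ p : List (V × V × ℕ), p ≠ [] ∧ p.head?.map Prod.fst = some v ∧
          p.getLast?.map (fun e => e.2.1) = some z ∧ (∀ e ∈ p, e ∈ E) ∧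
          p.Chain' (fun a b => a.2.1 = b.1) ∧
          p.Chain' (fun a b => a.2.2 < b.2.2) ∧
          ∀ e ∈ p.head?, t ≤ e.2.2 := by
  intro a h
  induction h using Relation.ReflTransGen.head_induction_on with
  | refl => intro v t h; cases h
  | head harc hrest ih =>
    intro v t hvt
    subst hvt
    cases harc with
    | step hE hvs hvz hws hwz =>
      rename_i w
      obtain ⟨p, hne, hhead, hlast, hmem, hchv, hcht, hts⟩ := ih w (t + 1) rfl
      refine ⟨(v, w, t) :: p, List.cons_ne_nil _ _, by simp, ?_, ?_, ?_, ?_, ?_⟩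
      · cases p with
        | nil => exact absurd rfl hne
        | cons f r => rw [List.getLast?_cons_cons]; exact hlast
      · intro e he
        rcases List.mem_cons.mp he with rfl | h
        · exact hE
        · exact hmem _ h
      · unfold List.Chain'; rw [List.isChain_cons]
        refine ⟨?_, hchv⟩
        intro y hy
        cases p with
        | nil => exact absurd rfl hne
        | cons f r =>
          simp only [List.head?_cons, Option.mem_some_iff] at hy
          subst hy
          simpa using hhead.symm
      · unfold List.Chain'; rw [List.isChain_cons]
        refine ⟨?_, hcht⟩
        intro y hy
        have := hts y hy
        show t < y.2.2
        omega
      · simp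
    | toSnk hE hvs hvz =>
      exact ⟨[(v, z, t)], List.cons_ne_nil _ _, by simp, by simp, by
        intro e he; rcases List.mem_cons.mp he with rfl | h
        · exact hE
        · simp at h, List.isChain_singleton _, List.isChain_singleton _, by simp⟩
    | col h1 h2 hlt hmin hvs hvz =>
      rename_i t'
      obtain ⟨p, hne, hhead, hlast, hmem, hchv, hcht, hts⟩ := ih v t' rfl
      exact ⟨p, hne, hhead, hlast, hmem, hchv, hcht,
        fun e he => le_trans (le_of_lt hlt) (hts e he)⟩

end Aux

/-- There is a strict temporal `(s,z)`-path in `G` iff there is a directed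
`(s,z)`-path in the strict static expansion `H` of `(G,s,z)`. -/
theorem strict_path_iff_expansion_path (E : Set (V × V × ℕ)) (s z : V)
    (hsz : s ≠ z) (hsym : ∀ u v t, (u, v, t) ∈ E → (v, u, t) ∈ E)
    (hnosz : ∀ t, (s, z, t) ∉ E ∧ (z, s, t) ∉ E) :
    (∃ p, IsStrictPath E s z p) ↔
      Relation.ReflTransGen (Arc E s z) ExpV.src ExpV.snk := by
  constructor
  · rintro ⟨p, hne, hhead, hlast, hmem, hchv, hnd, hcht⟩
    cases p with
    | nil => exact absurd rfl hne
    | cons e rest =>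
      obtain ⟨a, w, te⟩ := e
      have ha : s = a := by simpa [eq_comm] using hhead
      subst ha
      have heE : (s, w, te) ∈ E := hmem _ (List.mem_cons_self)
      rw [List.nodup_cons] at hnd
      have hws : w ≠ s := by
        intro h; subst h
        exact hnd.1 (by simp)
      cases rest with
      | nil =>
        have hwz : w = z := by simpa using hlast
        subst hwz
        exact absurd heE (hnosz te).1
      | cons f rest' =>
        rw [List.map_cons, List.nodup_cons] at hnd
        have hzlast : ((f :: rest').getLast?.map (fun e => e.2.1)) = some z := by
          rw [← List.getLast?_cons_cons]; exact hlast
        obtain ⟨g, hg1, hg2⟩ : ∃ g, (f :: rest').getLast? = some g ∧ g.2.1 = z := by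
          cases hh : (f :: rest').getLast? with
          | none => rw [hh] at hzlast; simp at hzlast
          | some g => rw [hh] at hzlast; exact ⟨g, rfl, by simpa using hzlast⟩
        have hzmem : z ∈ (f :: rest').map (fun e => e.2.1) :=
          hg2 ▸ List.mem_map_of_mem (List.mem_of_getLast? hg1)
        have hwz : w ≠ z := by
          intro h
          exact hnd.2.1 (by rw [h]; exact hzmem)
        have hwf : w = f.1 := (List.isChain_cons_cons.mp hchv).1
        refine Relation.ReflTransGen.head (Arc.fromSrc heE hws hwz)
          (reach_snk E s z hsym (f :: rest') w (te + 1) hws hwz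
            ⟨s, te, hsym _ _ _ heE, Or.inr rfl⟩ (List.cons_ne_nil _ _)
            (by simp [← hwf]) hzlast
            (fun e he => hmem e (List.mem_cons_of_mem _ he))
            (List.IsChain.tail hchv) (List.IsChain.tail hcht) ?_ ?_ hnd.2.2)
        · intro e he
          simp only [List.head?_cons, Option.mem_some_iff] at he
          subst he
          have := (List.isChain_cons_cons.mp hcht).1
          simp only at this
          omega
        · intro e he h
          exact hnd.1 (List.mem_cons_of_mem _ (h ▸ List.mem_map_of_mem he))
  · intro h
    rcases h.cases_head with heq | ⟨c, harc, hrest⟩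
    · exact (by cases heq)
    · cases harc with
      | fromSrc hE hws hwz =>
        rename_i w t
        obtain ⟨p, hne, hhead, hlast, hmem, hchv, hcht, hts⟩ :=
          extract_walk E s z _ hrest w (t + 1) rfl
        refine walk_to_path E s z hsz ((s, w, t) :: p).length _ le_rfl
          ⟨List.cons_ne_nil _ _, by simp, ?_, ?_, ?_, ?_⟩
        · cases p with
          | nil => exact absurd rfl hne
          | cons f r => rw [List.getLast?_cons_cons]; exact hlast
        · intro e he
          rcases List.mem_cons.mp he with rfl | h
          · exact hE
          · exact hmem _ h
        · unfold List.Chain'; rw [List.isChain_cons]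
          refine ⟨?_, hchv⟩
          intro y hy
          cases p with
          | nil => exact absurd rfl hne
          | cons f r =>
            simp only [List.head?_cons, Option.mem_some_iff] at hy
            subst hy
            simpa using hhead.symm
        · unfold List.Chain'; rw [List.isChain_cons]
          refine ⟨?_, hcht⟩
          intro y hy
          have := hts y hy
          show t < y.2.2
          omega


end TempSep
end

section
/- Let G be a reduced temporal graph with maximum label τ = 4 and distinct vertices s,z. Then the set V_{(1,1)} is empty, i.e., there is no vertex v such that both the shortest strict temporal (s,v)-path and the shortest strict temporal (v,z)-path have length 1. -/
namespace TempSep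

variable {V : Type*}

/-- The underlying simple graph of a temporal graph. -/
def underlyingSG (E : Set (V × V × ℕ)) : SimpleGraph V where
  Adj u v := u ≠ v ∧ ∃ t, (u, v, t) ∈ E ∨ (v, u, t) ∈ E
  symm := by
    constructor
    rintro u v ⟨h, t, ht⟩
    exact ⟨h.symm, t, ht.symm⟩
  loopless := by
    constructor
    rintro u ⟨h, -⟩
    exact h rfl

/-- A temporal graph is *reduced* (w.r.t. `s` and `z`): its underlying graph is
connected, every time-edge lies on some strict temporal `(s,z)`-path, and there
is no strict temporal `(s,z)`-path of length at most two. -/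
structure Reduced (E : Set (V × V × ℕ)) (s z : V) : Prop where
  conn : (underlyingSG E).Connected
  onPath : ∀ v w t, (v, w, t) ∈ E →
    ∃ p, IsStrictPath E s z p ∧ ((v, w, t) ∈ p ∨ (w, v, t) ∈ p)
  noShort : ∀ p, IsStrictPath E s z p → 2 < p.length

-- aux 1: no edge on a strict (s,z)-path has second endpoint s
lemma snd_ne_s {E : Set (V × V × ℕ)} {s z : V} {r : List (V × V × ℕ)}
    (hr : IsStrictPath E s z r) {e : V × V × ℕ} (he : e ∈ r) : e.2.1 ≠ s := by
  obtain ⟨-, -, -, -, -, hnd, -⟩ := hr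
  intro h
  have : s ∈ r.map (fun e => e.2.1) := List.mem_map.mpr ⟨e, he, h⟩
  exact (List.nodup_cons.mp hnd).1 this

-- aux 2: an edge with first endpoint s must be the head
lemma fst_eq_s_head {E : Set (V × V × ℕ)} {s z : V} {r : List (V × V × ℕ)}
    (hr : IsStrictPath E s z r) {e : V × V × ℕ} (he : e ∈ r) (hes : e.1 = s) :
    ∃ l, r = e :: l := by
  obtain ⟨l₁, l₂, rfl⟩ := List.append_of_mem he
  cases l₁ with
  | nil => exact ⟨l₂, rfl⟩
  | cons d l₁' =>
    exfalso
    have hcv := hr.2.2.2.2.1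
    rw [List.Chain', List.isChain_append] at hcv
    have h3 := hcv.2.2 ((d :: l₁').getLast (by simp))
      (by rw [List.getLast?_eq_getLast (by simp)]; rfl) e rfl
    have hmem : (d :: l₁').getLast (by simp) ∈ (d :: l₁') ++ e :: l₂ :=
      List.mem_append_left _ (List.getLast_mem _)
    exact snd_ne_s hr hmem (h3.trans hes)

-- aux 3: an edge with second endpoint z must be the last
lemma snd_eq_z_last {E : Set (V × V × ℕ)} {s z : V} {r : List (V × V × ℕ)}
    (hr : IsStrictPath E s z r) {e : V × V × ℕ} (he : e ∈ r) (hez : e.2.1 = z) :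
    ∃ l, r = l ++ [e] := by
  obtain ⟨l₁, l₂, rfl⟩ := List.append_of_mem he
  cases hl₂ : l₂ with
  | nil => exact ⟨l₁, by simp [hl₂]⟩
  | cons c l₂' =>
    exfalso
    subst hl₂
    obtain ⟨-, -, hlast, -, -, hnd, -⟩ := hr
    -- z is the last of map, but also appears at e's position; map is nodup
    have hnd' : ((l₁ ++ e :: c :: l₂').map (fun e => e.2.1)).Nodup :=
      (List.nodup_cons.mp hnd).2
    rw [List.map_append] at hnd'
    have hnd'' := (List.nodup_append.mp hnd').2.1
    simp only [List.map_cons] at hnd''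
    have hzz : z ∉ (c :: l₂').map (fun e => e.2.1) := by
      rw [← hez]; exact (List.nodup_cons.mp hnd'').1
    -- but the last of the whole list is in l₂' portion and equals z
    have hne : ((c :: l₂').map (fun e => e.2.1)) ≠ [] := by simp
    have : (l₁ ++ e :: c :: l₂').getLast? = (c :: l₂').getLast? := by
      rw [show l₁ ++ e :: c :: l₂' = (l₁ ++ [e]) ++ (c :: l₂') by simp,
        List.getLast?_append_of_ne_nil _ (by simp)]
    rw [this] at hlast
    have hlm : (c :: l₂').getLast (by simp) ∈ c :: l₂' := List.getLast_mem _
    have : ((c :: l₂').getLast (by simp)).2.1 = z := by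
      rw [List.getLast?_eq_getLast (by simp)] at hlast
      simpa using hlast
    exact hzz (List.mem_map.mpr ⟨_, hlm, this⟩)

-- aux 4: an edge with first endpoint z: then its second endpoint is also z
lemma fst_eq_z {E : Set (V × V × ℕ)} {s z : V} {r : List (V × V × ℕ)}
    (hr : IsStrictPath E s z r) (hsz : s ≠ z) {e : V × V × ℕ} (he : e ∈ r)
    (hez : e.1 = z) : e.2.1 = z := by
  obtain ⟨l₁, l₂, rfl⟩ := List.append_of_mem he
  obtain ⟨-, hhead, hlast, -, hcv, hnd, -⟩ := hr
  cases l₁ with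
  | nil =>
    exfalso
    simp only [List.nil_append, List.head?_cons, Option.map_some] at hhead
    exact hsz (by rw [← Option.some_inj.mp hhead, hez])
  | cons d l₁' =>
    by_contra hne
    rw [List.Chain', List.isChain_append] at hcv
    have h3 := hcv.2.2 ((d :: l₁').getLast (by simp))
      (by rw [List.getLast?_eq_getLast (by simp)]; rfl) e rfl
    -- so z appears among seconds of l₁
    have hz1 : z ∈ (d :: l₁').map (fun e => e.2.1) :=
      List.mem_map.mpr ⟨_, List.getLast_mem _, h3.trans hez⟩
    have hnd' : (((d :: l₁') ++ e :: l₂).map (fun e => e.2.1)).Nodup :=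
      (List.nodup_cons.mp hnd).2
    rw [List.map_append] at hnd'
    have hdisj := List.nodup_append.mp hnd'
    -- last of whole list is z; it lies in e :: l₂ portion
    have : ((d :: l₁') ++ e :: l₂).getLast? = (e :: l₂).getLast? := by
      rw [List.getLast?_append_of_ne_nil _ (by simp)]
    rw [this, List.getLast?_eq_getLast (by simp)] at hlast
    have hzl : ((e :: l₂).getLast (by simp)).2.1 = z := by simpa using hlast
    have hz2 : z ∈ (e :: l₂).map (fun e => e.2.1) :=
      List.mem_map.mpr ⟨_, List.getLast_mem _, hzl⟩
    exact hdisj.2.2 z hz1 z hz2 rfl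

-- time pairwise
lemma times_pairwise {E : Set (V × V × ℕ)} {s z : V} {r : List (V × V × ℕ)}
    (hr : IsStrictPath E s z r) :
    r.Pairwise (fun a b => a.2.2 < b.2.2) := by
  have hct := hr.2.2.2.2.2.2
  have : (r.map (fun e => e.2.2)).Chain' (· < ·) := (List.isChain_map _).mpr hct
  have := List.isChain_iff_pairwise.mp this
  exact (List.pairwise_map.mp this)


theorem first_le_two {E : Set (V × V × ℕ)} {s z : V}
    (hτ : ∀ e ∈ E, 1 ≤ e.2.2 ∧ e.2.2 ≤ 4) {r : List (V × V × ℕ)}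
    (hr : IsStrictPath E s z r) (hlen : 2 < r.length)
    {x y : V} {t : ℕ} (he : (x, y, t) ∈ r) (hx : x = s) : t ≤ 2 := by
  subst hx
  obtain ⟨l, hl⟩ := fst_eq_s_head hr he rfl
  subst hl
  match l, hlen with
  | a :: b :: l', _ =>
    have hpw := times_pairwise hr
    rw [List.pairwise_cons] at hpw
    have h1 : t < a.2.2 := hpw.1 a (by simp)
    have h2 : a.2.2 < b.2.2 := by
      rw [List.pairwise_cons] at hpw
      exact hpw.2.1 b (by simp)
    have h3 : b.2.2 ≤ 4 := (hτ b (hr.2.2.2.1 b (by simp))).2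
    omega

theorem last_ge_three {E : Set (V × V × ℕ)} {s z : V}
    (hτ : ∀ e ∈ E, 1 ≤ e.2.2 ∧ e.2.2 ≤ 4) {r : List (V × V × ℕ)}
    (hr : IsStrictPath E s z r) (hlen : 2 < r.length)
    {x y : V} {t : ℕ} (he : (x, y, t) ∈ r) (hy : y = z) : 3 ≤ t := by
  subst hy
  obtain ⟨l, hl⟩ := snd_eq_z_last hr he (by rfl)
  subst hl
  match l, hlen with
  | a :: b :: l', _ =>
    have hpw := times_pairwise hr
    rw [List.cons_append, List.cons_append, List.pairwise_cons] at hpw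
    have h1 : a.2.2 < b.2.2 := hpw.1 b (by simp)
    have h2 : b.2.2 < t := by
      rw [List.pairwise_cons] at hpw
      exact hpw.2.1 (x, y, t) (by simp)
    have h3 : 1 ≤ a.2.2 := (hτ a (hr.2.2.2.1 a (by simp))).1
    omega

/-- In a reduced temporal graph with maximum label `τ = 4`, the set `V_{(1,1)}`
is empty: there is no vertex `v` such that both the shortest strict temporal
`(s,v)`-path and the shortest strict temporal `(v,z)`-path have length `1`. -/
theorem V11_empty (E : Set (V × V × ℕ)) (s z : V) (hsz : s ≠ z)
    (hsym : ∀ u v t, (u, v, t) ∈ E → (v, u, t) ∈ E)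
    (hτ : ∀ e ∈ E, 1 ≤ e.2.2 ∧ e.2.2 ≤ 4)
    (hred : Reduced E s z) :
    ¬ ∃ v : V, (∃ p, IsStrictPath E s v p ∧ p.length = 1) ∧
      (∃ q, IsStrictPath E v z q ∧ q.length = 1) := by
  rintro ⟨v, ⟨p, hp, hp1⟩, ⟨q, hq, hq1⟩⟩
  obtain ⟨e₁, rfl⟩ := List.length_eq_one_iff.mp hp1
  obtain ⟨e₂, rfl⟩ := List.length_eq_one_iff.mp hq1
  obtain ⟨a, b, t1⟩ := e₁
  obtain ⟨c, d, t2⟩ := e₂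
  obtain ⟨-, hh1, hl1, hm1, -, hn1, -⟩ := hp
  obtain ⟨-, hh2, hl2, hm2, -, hn2, -⟩ := hq
  simp only [List.head?_cons, Option.map_some, List.getLast?_singleton,
    Option.some_inj] at hh1 hl1 hh2 hl2
  subst hh1 hl1 hh2 hl2
  have hE1 : (a, c, t1) ∈ E := hm1 _ (by simp)
  have hE2 : (c, d, t2) ∈ E := hm2 _ (by simp)
  have hsv : a ≠ c := by simp at hn1; tauto
  have hvz : c ≠ d := by simp at hn2; tauto
  -- t1 ≤ 2
  obtain ⟨r₁, hr₁, hor₁⟩ := hred.onPath a c t1 hE1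
  have ht1 : t1 ≤ 2 := by
    rcases hor₁ with h | h
    · exact first_le_two hτ hr₁ (hred.noShort _ hr₁) h rfl
    · exact absurd rfl (snd_ne_s hr₁ h)
  obtain ⟨r₂, hr₂, hor₂⟩ := hred.onPath c d t2 hE2
  have ht2 : 3 ≤ t2 := by
    rcases hor₂ with h | h
    · exact last_ge_three hτ hr₂ (hred.noShort _ hr₂) h rfl
    · exact absurd (fst_eq_z hr₂ hsz h rfl) hvz
  -- build the length-2 path
  have hP : IsStrictPath E a d [(a, c, t1), (c, d, t2)] := by
    refine ⟨by simp, by simp, by simp, ?_, ?_, ?_, ?_⟩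
    · rintro e he
      simp at he
      rcases he with rfl | rfl
      · exact hE1
      · exact hE2
    · simp [List.Chain', List.isChain_cons_cons]
    · simp [hsv, hsz, hvz]
    · simp [List.Chain', List.isChain_cons_cons]; omega
  have := hred.noShort _ hP
  simp at this


end TempSep
end

section
/- Let G = (V,E) be a static graph, s,z distinct vertices, ℓ, k naturals, and let G' be the temporal graph with τ = ℓ whose layer at every time t ∈ {1,...,ℓ} equals G. Then G has a vertex set S ⊆ V \ {s,z} of size at most k destroying all (s,z)-paths of length at most ℓ if and only if G' has a strict temporal (s,z)-separator of size at most k. -/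
namespace TempSep

variable {V : Type*}

/-- A static `(s,z)`-path given as a list of directed edges. -/
def IsStaticPath (F : Set (V × V)) (s z : V) (p : List (V × V)) : Prop :=
  p ≠ [] ∧
  p.head?.map Prod.fst = some s ∧
  p.getLast?.map Prod.snd = some z ∧
  (∀ e ∈ p, e ∈ F) ∧
  p.Chain' (fun a b => a.2 = b.1) ∧
  (s :: p.map Prod.snd).Nodup

/-- The static path `p` avoids the vertex set `S`. -/
def StaticAvoids (S : Set V) (p : List (V × V)) : Prop :=
  ∀ e ∈ p, e.1 ∉ S ∧ e.2 ∉ S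

/-- `S` is a static `(s,z)`-separator. -/
def IsStaticSep (F : Set (V × V)) (s z : V) (S : Set V) : Prop :=
  s ∉ S ∧ z ∉ S ∧ ∀ p, IsStaticPath F s z p → ¬ StaticAvoids S p

/-- The (edge set of the) underlying static graph of a temporal graph. -/
def underlying (E : Set (V × V × ℕ)) : Set (V × V) :=
  {uv | ∃ t, (uv.1, uv.2, t) ∈ E}

/-- Attach increasing time labels `t, t+1, …` to a list of static edges. -/
def addTimes (t : ℕ) : List (V × V) → List (V × V × ℕ)
  | [] => []
  | e :: l => (e.1, e.2, t) :: addTimes (t + 1) l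

lemma addTimes_map (t : ℕ) (l : List (V × V)) :
    (addTimes t l).map (fun e => (e.1, e.2.1)) = l := by
  induction l generalizing t with
  | nil => rfl
  | cons e l ih => simp [addTimes, ih]

lemma mem_addTimes {t : ℕ} {l : List (V × V)} {x : V × V × ℕ}
    (hx : x ∈ addTimes t l) :
    (x.1, x.2.1) ∈ l ∧ t ≤ x.2.2 ∧ x.2.2 < t + l.length := by
  induction l generalizing t with
  | nil => simp [addTimes] at hx
  | cons e l ih =>
    simp only [addTimes, List.mem_cons] at hx
    rcases hx with rfl | hx
    · simp
    · obtain ⟨h1, h2, h3⟩ := ih hx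
      refine ⟨List.mem_cons_of_mem _ h1, by omega, ?_⟩
      simp only [List.length_cons]; omega

lemma chain'_time (t : ℕ) (l : List (V × V)) :
    (addTimes t l).Chain' (fun a b => a.2.2 < b.2.2) := by
  induction l generalizing t with
  | nil => exact List.isChain_nil
  | cons e l ih =>
    rw [addTimes, List.Chain', List.isChain_cons]
    refine ⟨?_, ih (t + 1)⟩
    intro b hb
    have := (mem_addTimes (List.mem_of_mem_head? hb)).2.1
    simpa using by omega

/-- A static graph has a vertex set of size at most `k` destroying all
`(s,z)`-paths of length at most `ℓ` iff the temporal graph whose every layer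
`t ∈ {1,…,ℓ}` equals the static graph has a strict temporal `(s,z)`-separator
of size at most `k`. -/
theorem length_bounded_sep_iff_strict_temporal_sep (F : Set (V × V))
    (s z : V) (hsz : s ≠ z) (ℓ k : ℕ) :
    (∃ S : Set V, S.Finite ∧ S.ncard ≤ k ∧ s ∉ S ∧ z ∉ S ∧
      ∀ p, IsStaticPath F s z p → p.length ≤ ℓ → ¬ StaticAvoids S p) ↔
      (∃ S : Set V, S.Finite ∧ S.ncard ≤ k ∧
        IsStrictSep {e : V × V × ℕ | (e.1, e.2.1) ∈ F ∧ 1 ≤ e.2.2 ∧ e.2.2 ≤ ℓ}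
          s z S) := by
  constructor
  · rintro ⟨S, hfin, hcard, hs, hz, hsep⟩
    refine ⟨S, hfin, hcard, hs, hz, ?_⟩
    rintro p ⟨hne, hhd, hlast, hmem, hch, hnd, htime⟩ hav
    set f : V × V × ℕ → V × V := fun e => (e.1, e.2.1) with hf
    -- the times are a strictly increasing list inside {1,…,ℓ}
    have hlen : p.length ≤ ℓ := by
      set L : List ℕ := p.map (fun e => e.2.2) with hL
      have hchL : L.Chain' (· < ·) := by
        rw [hL, List.Chain', List.isChain_map]; exact htime
      have hndL : L.Nodup := by
        have := List.isChain_iff_pairwise.mp hchL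
        exact this.imp Nat.ne_of_lt
      have hsub : L.toFinset ⊆ Finset.Icc 1 ℓ := by
        intro x hx
        rw [List.mem_toFinset, hL, List.mem_map] at hx
        obtain ⟨e, he, rfl⟩ := hx
        have := hmem e he
        simp only [Set.mem_setOf_eq] at this
        exact Finset.mem_Icc.mpr ⟨this.2.1, this.2.2⟩
      have := Finset.card_le_card hsub
      rw [List.toFinset_card_of_nodup hndL, Nat.card_Icc] at this
      have hlenL : L.length = p.length := by simp [hL]
      omega
    refine hsep (p.map f) ⟨?_, ?_, ?_, ?_, ?_, ?_⟩ (by simpa using hlen) ?_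
    · simpa using hne
    · rw [List.head?_map, Option.map_map]
      exact hhd
    · rw [List.getLast?_map, Option.map_map]
      exact hlast
    · intro e he
      rw [List.mem_map] at he
      obtain ⟨x, hx, rfl⟩ := he
      exact (hmem x hx).1
    · rw [List.Chain', List.isChain_map]; exact hch
    · rw [List.map_map]; exact hnd
    · intro e he
      rw [List.mem_map] at he
      obtain ⟨x, hx, rfl⟩ := he
      exact hav x hx
  · rintro ⟨S, hfin, hcard, hs, hz, hsep⟩
    refine ⟨S, hfin, hcard, hs, hz, ?_⟩
    rintro q ⟨hne, hhd, hlast, hmem, hch, hnd⟩ hlen hav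
    set p : List (V × V × ℕ) := addTimes 1 q with hp
    set f : V × V × ℕ → V × V := fun e => (e.1, e.2.1) with hf
    have hmapf : p.map f = q := addTimes_map 1 q
    refine hsep p ⟨?_, ?_, ?_, ?_, ?_, ?_, ?_⟩ ?_
    · intro h
      apply hne
      rw [← hmapf, h]; rfl
    · rw [← hmapf, List.head?_map, Option.map_map] at hhd
      exact hhd
    · rw [← hmapf, List.getLast?_map, Option.map_map] at hlast
      exact hlast
    · intro e he
      obtain ⟨h1, h2, h3⟩ := mem_addTimes he
      exact ⟨hmem _ h1, h2, by omega⟩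
    · rw [← hmapf, List.Chain', List.isChain_map] at hch
      exact hch
    · rw [← hmapf, List.map_map] at hnd
      exact hnd
    · exact chain'_time 1 q
    · intro e he
      exact hav _ (mem_addTimes he).1

end TempSep
end
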